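/- arXiv:2203.02036 — 3 statements merged into one kernel-verified Lean document; each statement's English description precedes it below -/
import Mathlib

section
/- Let α be the inverse golden mean. For every fixed integer v > 2, the set of positive periodic rotation numbers of the form (w + uα)/v with u, v, w integers, gcd(u,v,w)=1, and |u/v − (w/v)α| ≤ 1/2, is a discrete subset of ℝ (has no accumulation point). -/
/-- For `α = (√5−1)/2` and each fixed integer `v > 2`, the set of positive periodic
rotation numbers `ρ = w/v + (u/v)α ∈ [0,1/2]` with `gcd(u,v,w) = 1` and
`|u/v − (w/v)α| ≤ 1/2` has no accumulation point in `ℝ`. -/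
theorem positive_periodic_discrete (α : ℝ) (hα : α = (Real.sqrt 5 - 1) / 2)
    (v : ℤ) (hv : 2 < v) :
    ∀ x : ℝ, ¬ AccPt x (Filter.principal
      {ρ : ℝ | ρ ∈ Set.Icc (0 : ℝ) (1 / 2) ∧ ∃ u w : ℤ,
        ρ = (w : ℝ) / v + (u : ℝ) / v * α ∧
        Int.gcd u (Int.gcd v w : ℤ) = 1 ∧
        |(u : ℝ) / v - (w : ℝ) / v * α| ≤ 1 / 2}) := by
  intro x hx
  set S : Set ℝ := {ρ : ℝ | ρ ∈ Set.Icc (0 : ℝ) (1 / 2) ∧ ∃ u w : ℤ,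
        ρ = (w : ℝ) / v + (u : ℝ) / v * α ∧
        Int.gcd u (Int.gcd v w : ℤ) = 1 ∧
        |(u : ℝ) / v - (w : ℝ) / v * α| ≤ 1 / 2} with hS
  have hvR : (0 : ℝ) < (v : ℝ) := by exact_mod_cast lt_trans (by norm_num) hv
  have h5 : Real.sqrt 5 ^ 2 = 5 := Real.sq_sqrt (by norm_num)
  have hαsq : α ^ 2 = 1 - α := by rw [hα]; nlinarith [h5]
  have hα0 : 0 < α := by
    rw [hα]; nlinarith [Real.sq_sqrt (show (0:ℝ) ≤ 5 by norm_num),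
      Real.sqrt_nonneg 5]
  have hα1 : α < 1 := by nlinarith
  -- S is contained in a finite set
  have hsub : S ⊆ (fun p : ℤ × ℤ => (p.2 : ℝ) / v + (p.1 : ℝ) / v * α) ''
      ((Set.Icc (-v) v) ×ˢ (Set.Icc (-v) v)) := by
    rintro ρ ⟨⟨h0, h12⟩, u, w, hρ, _, habs⟩
    refine ⟨(u, w), ⟨?_, ?_⟩, hρ.symm⟩
    · -- bound on u
      have hA0 : (0 : ℝ) ≤ (w : ℝ) + u * α := by
        have := h0; rw [hρ] at this
        have : 0 ≤ ((w : ℝ) / v + (u : ℝ) / v * α) * v := by positivity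
        calc (0:ℝ) ≤ ((w : ℝ) / v + (u : ℝ) / v * α) * v := this
          _ = (w : ℝ) + u * α := by field_simp
      have hA1 : (w : ℝ) + u * α ≤ v / 2 := by
        rw [hρ] at h12
        have h' : ((w : ℝ) / v + (u : ℝ) / v * α) * v ≤ (1/2) * v :=
          mul_le_mul_of_nonneg_right h12 hvR.le
        calc (w : ℝ) + u * α = ((w : ℝ) / v + (u : ℝ) / v * α) * v := by field_simp
          _ ≤ (1/2) * v := h'
          _ = v / 2 := by ring
      have hB : |(u : ℝ) - w * α| ≤ v / 2 := by
        have h' : |(u : ℝ) / v - (w : ℝ) / v * α| * v ≤ (1/2) * v :=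
          mul_le_mul_of_nonneg_right habs hvR.le
        have he : (u : ℝ) - w * α = ((u : ℝ) / v - (w : ℝ) / v * α) * v := by
          field_simp
        rw [he, abs_mul, abs_of_pos hvR]; linarith
      have hBl : -(v/2 : ℝ) ≤ (u : ℝ) - w * α := (abs_le.mp hB).1
      have hBr : (u : ℝ) - w * α ≤ v / 2 := (abs_le.mp hB).2
      have key : (u : ℝ) * (1 + α ^ 2) = ((w : ℝ) + u * α) * α + ((u : ℝ) - w * α) := by
        ring
      constructor
      · have : -(v : ℝ) ≤ (u : ℝ) := by nlinarith
        exact_mod_cast this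
      · have : (u : ℝ) ≤ v := by nlinarith
        exact_mod_cast this
    · -- bound on w
      have hA0 : (0 : ℝ) ≤ (w : ℝ) + u * α := by
        have : 0 ≤ ((w : ℝ) / v + (u : ℝ) / v * α) * v := by
          rw [hρ] at h0; positivity
        calc (0:ℝ) ≤ ((w : ℝ) / v + (u : ℝ) / v * α) * v := this
          _ = (w : ℝ) + u * α := by field_simp
      have hA1 : (w : ℝ) + u * α ≤ v / 2 := by
        rw [hρ] at h12
        have h' : ((w : ℝ) / v + (u : ℝ) / v * α) * v ≤ (1/2) * v :=
          mul_le_mul_of_nonneg_right h12 hvR.le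
        calc (w : ℝ) + u * α = ((w : ℝ) / v + (u : ℝ) / v * α) * v := by field_simp
          _ ≤ (1/2) * v := h'
          _ = v / 2 := by ring
      have hB : |(u : ℝ) - w * α| ≤ v / 2 := by
        have h' : |(u : ℝ) / v - (w : ℝ) / v * α| * v ≤ (1/2) * v :=
          mul_le_mul_of_nonneg_right habs hvR.le
        have he : (u : ℝ) - w * α = ((u : ℝ) / v - (w : ℝ) / v * α) * v := by
          field_simp
        rw [he, abs_mul, abs_of_pos hvR]; linarith
      have hBl : -(v/2 : ℝ) ≤ (u : ℝ) - w * α := (abs_le.mp hB).1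
      have hBr : (u : ℝ) - w * α ≤ v / 2 := (abs_le.mp hB).2
      have key : (w : ℝ) * (1 + α ^ 2) = ((w : ℝ) + u * α) - ((u : ℝ) - w * α) * α := by
        ring
      constructor
      · have : -(v : ℝ) ≤ (w : ℝ) := by nlinarith
        exact_mod_cast this
      · have : (w : ℝ) ≤ v := by nlinarith
        exact_mod_cast this
  have hfin : S.Finite :=
    Set.Finite.subset (((Set.finite_Icc _ _).prod (Set.finite_Icc _ _)).image _) hsub
  rw [accPt_principal_iff_clusterPt] at hx
  have hx' : x ∈ closure (S \ {x}) := mem_closure_iff_clusterPt.mpr hx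
  have hcl : IsClosed (S \ {x}) := (hfin.subset Set.diff_subset).isClosed
  have := hcl.closure_eq ▸ hx'
  exact this.2 rfl
end

section
/- Let α = (√5 − 1)/2 and q_k = p_{k+1} with p_k Fibonacci. For every n ≥ 1, the orbit {ρ + jα mod 1 : |j| ≤ (q_{3n}−1)/2} of length q_{3n} centered at ρ has all gaps between consecutive points (on the circle ℝ/ℤ) equal to either α^{3n−1} or α^{3n}. -/
private lemma fibid' (α : ℝ) (h2 : α^2 = 1 - α) :
    ∀ k : ℕ, (Nat.fib (k+1) : ℝ) * α - Nat.fib k = (-1)^k * α^(k+1) := by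
  intro k
  induction k with
  | zero => simp
  | succ k ih =>
    rw [Nat.fib_add_two]
    push_cast
    push_cast at ih
    linear_combination (-α) * ih + (Nat.fib (k+1) : ℝ) * h2

private lemma aux_abs (X Y c1 c2 : ℝ) (h1 : c1 ≤ |X|) (h2 : |Y| ≤ c2) :
    c1 - c2 ≤ |X + Y| := by
  have h := abs_sub_abs_le_abs_sub X (-Y)
  rw [abs_neg, sub_neg_eq_add] at h
  linarith

private lemma best' (α : ℝ) (h0 : 0 < α) (h1 : α < 1) (h2 : α^2 = 1 - α) :
    ∀ m : ℕ, ∀ d : ℤ, d ≠ 0 → |d| < (Nat.fib (m+1) : ℤ) → ∀ p : ℤ, α^m ≤ |(d:ℝ)*α - p| := by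
  have hhalf : (1:ℝ)/2 < α := by nlinarith
  have h2half : α^2 < 1/2 := by nlinarith
  suffices H : ∀ m : ℕ, (∀ d : ℤ, d ≠ 0 → |d| < (Nat.fib (m+1) : ℤ) → ∀ p : ℤ, α^m ≤ |(d:ℝ)*α - p|) ∧
      (∀ d : ℤ, d ≠ 0 → |d| < (Nat.fib (m+2) : ℤ) → ∀ p : ℤ, α^(m+1) ≤ |(d:ℝ)*α - p|) from
    fun m => (H m).1
  intro m
  induction m with
  | zero =>
    constructor
    · intro d hd habs p
      exfalso
      have hf : Nat.fib 1 = 1 := rfl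
      rw [hf, Nat.cast_one, abs_lt] at habs
      omega
    · intro d hd habs p
      exfalso
      have hf : Nat.fib 2 = 1 := rfl
      rw [hf, Nat.cast_one, abs_lt] at habs
      omega
  | succ m ih =>
    refine ⟨ih.2, ?_⟩
    have hps : α^(m+2) ≤ α^(m+1) := pow_le_pow_of_le_one h0.le h1.le (by omega)
    have hp2 : α^(m+2) ≤ α^2 := pow_le_pow_of_le_one h0.le h1.le (by omega)
    have key : ∀ d : ℤ, (Nat.fib (m+2) : ℤ) ≤ d → |d| < (Nat.fib (m+3) : ℤ) →
        ∀ p : ℤ, α^(m+2) ≤ |(d:ℝ)*α - p| := by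
      intro d hdl hdabs p
      have hfibpos : (0:ℤ) < Nat.fib (m+2) := by exact_mod_cast Nat.fib_pos.mpr (by omega)
      have hd0 : 0 < d := lt_of_lt_of_le hfibpos hdl
      have hid := fibid' α h2 (m+1)
      have habs_sign : |((-1:ℝ))^(m+1) * α^(m+2)| = α^(m+2) := by
        rw [abs_mul, abs_pow, abs_neg, abs_one, one_pow, one_mul, abs_pow, abs_of_pos h0]
      set e : ℤ := d - Nat.fib (m+2) with he
      by_cases he0 : e = 0
      · have hd : (d:ℝ) = (Nat.fib (m+2) : ℝ) := by
          have : d = (Nat.fib (m+2) : ℤ) := by omega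
          exact_mod_cast congrArg (Int.cast : ℤ → ℝ) this
        by_cases hq : p = (Nat.fib (m+1) : ℤ)
        · rw [hd, hq]
          push_cast
          rw [hid, habs_sign]
        · have hq1 : (1:ℝ) ≤ |((Nat.fib (m+1) : ℝ)) - (p:ℝ)| := by
            have hne : (Nat.fib (m+1) : ℤ) - p ≠ 0 := by omega
            have h1' : (1:ℤ) ≤ |(Nat.fib (m+1) : ℤ) - p| := by
              rcases hne.lt_or_gt with h | h
              · rw [abs_of_neg h]; omega
              · rw [abs_of_pos h]; omega
            exact_mod_cast h1'
          have hrw : (d:ℝ)*α - p = (((Nat.fib (m+1) : ℝ)) - p) + (-1)^(m+1)*α^(m+2) := by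
            rw [hd]; linear_combination hid
          rw [hrw]
          have := aux_abs (((Nat.fib (m+1) : ℝ)) - p) ((-1)^(m+1)*α^(m+2)) 1 (α^(m+2)) hq1 (le_of_eq habs_sign)
          nlinarith
      · have he1 : 0 < e := by omega
        have he2 : |e| < (Nat.fib (m+1) : ℤ) := by
          have hfib : (Nat.fib (m+3) : ℤ) = (Nat.fib (m+1) : ℤ) + (Nat.fib (m+2) : ℤ) := by
            have := Nat.fib_add_two (n := m+1)
            exact_mod_cast congrArg (Nat.cast : ℕ → ℤ) this
          rw [abs_of_pos hd0] at hdabs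
          rw [abs_of_pos he1, he]
          omega
        have hbe := ih.1 e he0 he2 (p - Nat.fib (m+1))
        have hrw : (d:ℝ)*α - p = ((e:ℝ)*α - (↑(p - (Nat.fib (m+1):ℤ)) : ℝ)) + (-1)^(m+1)*α^(m+2) := by
          have hde : (d:ℝ) = (e:ℝ) + (Nat.fib (m+2) : ℝ) := by push_cast [he]; ring
          rw [hde]; push_cast; linear_combination hid
        rw [hrw]
        have hlow := aux_abs ((e:ℝ)*α - (↑(p - (Nat.fib (m+1):ℤ)) : ℝ)) ((-1)^(m+1)*α^(m+2)) (α^m) (α^(m+2)) hbe (le_of_eq habs_sign)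
        have hpow : α^m - α^(m+2) = α^(m+1) := by linear_combination (-(α^m)) * h2
        linarith
    intro d hd habs p
    by_cases hsmall : |d| < (Nat.fib (m+2) : ℤ)
    · exact le_trans hps (ih.2 d hd hsmall p)
    · push_neg at hsmall
      rcases lt_or_gt_of_ne hd with hneg | hpos
      · have habs' : |(-d)| < (Nat.fib (m+3) : ℤ) := by rw [abs_neg]; exact_mod_cast habs
        have hdl : (Nat.fib (m+2) : ℤ) ≤ -d := by rw [abs_of_neg hneg] at hsmall; omega
        have h := key (-d) hdl habs' (-p)
        rwa [show ((-d:ℤ):ℝ)*α - ((-p:ℤ):ℝ) = -((d:ℝ)*α - p) by push_cast; ring, abs_neg] at h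
      · have hdl : (Nat.fib (m+2) : ℤ) ≤ d := by rw [abs_of_pos hpos] at hsmall; omega
        exact key d hdl habs p

private lemma fact2' (α : ℝ) (h0 : 0 < α) (h1 : α < 1) (h2 : α^2 = 1 - α) (N : ℕ)
    (d z : ℤ) (hd : d ≠ 0) (hdb : |d| < (Nat.fib (3*N+4) : ℤ))
    (hpos : 0 < (d:ℝ)*α + z) (hlt : (d:ℝ)*α + z < α^(3*N+2)) :
    d = - (-1)^(N+1) * (Nat.fib (3*N+3) : ℤ) := by
  have hhalf : (1:ℝ)/2 < α := by nlinarith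
  have h2half : α^2 < 1/2 := by nlinarith
  obtain ⟨s, hs⟩ : ∃ s : ℝ, s = (-1:ℝ)^N := ⟨_, rfl⟩
  have hss : s * s = 1 := by rw [hs, ← pow_add]; exact Even.neg_one_pow ⟨N, rfl⟩
  have hs1 : s = 1 ∨ s = -1 := by
    rcases Nat.even_or_odd N with h | h
    · left; rw [hs]; exact Even.neg_one_pow h
    · right; rw [hs]; exact Odd.neg_one_pow h
  have hA : (Nat.fib (3*N+3) : ℝ) * α - (Nat.fib (3*N+2) : ℝ) = s * α^(3*N+3) := by
    have h := fibid' α h2 (3*N+2)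
    rw [show 3*N+2+1 = 3*N+3 from by omega] at h
    rw [h, hs, show ((-1:ℝ))^(3*N+2) = (-1)^N from by rw [pow_add, pow_mul]; norm_num]
  have hB : (Nat.fib (3*N+4) : ℝ) * α - (Nat.fib (3*N+3) : ℝ) = (-s) * α^(3*N+4) := by
    have h := fibid' α h2 (3*N+3)
    rw [show 3*N+3+1 = 3*N+4 from by omega] at h
    rw [h, hs, show ((-1:ℝ))^(3*N+3) = -(-1)^N from by rw [pow_add, pow_mul]; norm_num]
  obtain ⟨E, hEdef⟩ : ∃ E : ℤ, E = (-1:ℤ)^(N+1) := ⟨_, rfl⟩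
  obtain ⟨a, hadef⟩ : ∃ a : ℤ, a = (Nat.fib (3*N+3) : ℤ) := ⟨_, rfl⟩
  obtain ⟨b, hbdef⟩ : ∃ b : ℤ, b = (Nat.fib (3*N+4) : ℤ) := ⟨_, rfl⟩
  rw [← hEdef, ← hadef]
  rw [← hbdef] at hdb
  have hE : E = 1 ∨ E = -1 := by
    rcases Nat.even_or_odd (N+1) with h | h
    · left; rw [hEdef]; exact Even.neg_one_pow h
    · right; rw [hEdef]; exact Odd.neg_one_pow h
  have hEs : ((E:ℤ) : ℝ) = -s := by
    rw [hEdef, hs]; push_cast; rw [pow_succ]; ring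
  have hfib4 : (Nat.fib (3*N+3+1) : ℤ) = b := by
    rw [show 3*N+3+1 = 3*N+4 from by omega, hbdef]
  have hfib3 : (Nat.fib (3*N+2+1) : ℤ) = a := by
    rw [show 3*N+2+1 = 3*N+3 from by omega, hadef]
  have hδlow : α^(3*N+3) ≤ (d:ℝ)*α + z := by
    have h := best' α h0 h1 h2 (3*N+3) d hd (by rw [hfib4]; exact hdb) (-z)
    rw [show ((-z:ℤ):ℝ) = -(z:ℝ) from by push_cast; ring, sub_neg_eq_add] at h
    calc α^(3*N+3) ≤ |(d:ℝ)*α + z| := h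
      _ = (d:ℝ)*α + z := abs_of_pos hpos
  have hpows : α^(3*N+2) - α^(3*N+3) = α^(3*N+4) := by
    linear_combination (-(α^(3*N+2))) * h2
  have hpow4pos : (0:ℝ) < α^(3*N+4) := pow_pos h0 _
  have hpow3pos : (0:ℝ) < α^(3*N+3) := pow_pos h0 _
  have h2a : 2 * α^(3*N+4) < α^(3*N+2) := by
    have hpp : (0:ℝ) < α^(3*N+2) := pow_pos h0 _
    have he4 : α^(3*N+4) = α^(3*N+2) * α^2 := by ring
    nlinarith
  by_contra hcon
  obtain ⟨W, hW⟩ : ∃ W : ℤ, W = z - E * (Nat.fib (3*N+2) : ℤ) := ⟨_, rfl⟩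
  have hd' : d + E * a ≠ 0 := fun hh => hcon (by linear_combination hh)
  have hval' : ((d + E * a : ℤ):ℝ)*α + (W:ℝ) = ((d:ℝ)*α + z) - α^(3*N+3) := by
    rw [hW, hadef]
    push_cast
    rw [hEs]
    linear_combination (-s) * hA + (-(α^(3*N+3))) * hss
  by_cases hsplit : |d + E * a| < b
  · have h := best' α h0 h1 h2 (3*N+3) (d + E * a) hd' (by rw [hfib4]; exact hsplit) (-W)
    rw [show ((-W:ℤ):ℝ) = -(W:ℝ) from by push_cast; ring, sub_neg_eq_add, hval'] at h
    have hub : |((d:ℝ)*α + z) - α^(3*N+3)| < α^(3*N+4) := by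
      rw [abs_lt]; constructor
      · linarith
      · linarith
    have hlt34 : α^(3*N+4) < α^(3*N+3) := by
      calc α^(3*N+4) = α^(3*N+3) * α := by ring
        _ < α^(3*N+3) * 1 := mul_lt_mul_of_pos_left h1 hpow3pos
        _ = α^(3*N+3) := by ring
    linarith
  · push_neg at hsplit
    have hfib_rec : b = (Nat.fib (3*N+2) : ℤ) + a := by
      rw [hbdef, hadef]
      have hh : Nat.fib (3*N+4) = Nat.fib (3*N+2) + Nat.fib (3*N+3) := by
        rw [show 3*N+4 = (3*N+2)+2 from by omega, Nat.fib_add_two,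
            show 3*N+2+1 = 3*N+3 from by omega]
      have := congrArg (Nat.cast : ℕ → ℤ) hh
      push_cast at this
      omega
    have hfibpos : (0:ℤ) < (Nat.fib (3*N+2) : ℤ) := by
      exact_mod_cast Nat.fib_pos.mpr (by omega)
    have hapos : (0:ℤ) < a := by
      rw [hadef]; exact_mod_cast Nat.fib_pos.mpr (by omega)
    obtain ⟨σ, hσ⟩ : ∃ σ : ℤ, σ = if 0 ≤ d + E * a then 1 else -1 := ⟨_, rfl⟩
    have hσc : (0 ≤ d + E * a ∧ σ = 1) ∨ (d + E * a < 0 ∧ σ = -1) := by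
      rcases le_or_gt 0 (d + E * a) with h | h
      · left; exact ⟨h, by rw [hσ, if_pos h]⟩
      · right; exact ⟨h, by rw [hσ, if_neg (not_le.mpr h)]⟩
    have hσ1 : σ = 1 ∨ σ = -1 := by
      rcases hσc with ⟨-, h⟩ | ⟨-, h⟩
      · exact Or.inl h
      · exact Or.inr h
    have hd''abs : |d + E * a - σ * b| < a := by
      rcases abs_cases d with ⟨hc1, hc2⟩ | ⟨hc1, hc2⟩ <;>
      rcases abs_cases (d + E * a) with ⟨hb1, hb2⟩ | ⟨hb1, hb2⟩ <;>
      rcases abs_cases (d + E * a - σ * b) with ⟨ha1, ha2⟩ | ⟨ha1, ha2⟩ <;>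
      rcases hE with rfl | rfl <;>
      rcases hσc with ⟨hq1, rfl⟩ | ⟨hq1, rfl⟩ <;>
      omega
    have hval'' : ((d + E * a - σ * b : ℤ):ℝ)*α + ((W + σ * a : ℤ):ℝ)
        = (((d:ℝ)*α + z) - α^(3*N+3)) + (σ:ℝ) * s * α^(3*N+4) := by
      rw [hW, hadef, hbdef]
      push_cast
      rw [hEs]
      linear_combination (-s) * hA + (-(α^(3*N+3))) * hss + (-(σ:ℝ)) * hB
    have hts : (σ:ℝ) * s = 1 ∨ (σ:ℝ) * s = -1 := by
      rcases hσ1 with rfl | rfl <;> rcases hs1 with rfl | rfl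
      · left; norm_num
      · right; norm_num
      · right; norm_num
      · left; norm_num
    have hδ0 : 0 ≤ ((d:ℝ)*α + z) - α^(3*N+3) := by linarith
    have hδub : ((d:ℝ)*α + z) - α^(3*N+3) < α^(3*N+4) := by linarith
    have hval''bound : |((d + E * a - σ * b : ℤ):ℝ)*α + ((W + σ * a : ℤ):ℝ)| < 2 * α^(3*N+4) := by
      rw [hval'']
      rcases hts with h | h <;> rw [h] <;> rw [abs_lt] <;> constructor <;> linarith
    by_cases hd''0 : d + E * a - σ * b = 0
    · rw [hd''0] at hval''bound hval''
      have hz1 : |((W + σ * a : ℤ):ℝ)| < 1 := by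
        have hle : α^(3*N+4) ≤ α^2 :=
          pow_le_pow_of_le_one h0.le h1.le (by omega)
        have : |((0:ℤ):ℝ)*α + ((W + σ * a : ℤ):ℝ)| = |((W + σ * a : ℤ):ℝ)| := by
          norm_num
        rw [this] at hval''bound
        linarith
      have hz0 : W + σ * a = 0 := by
        have h' : |W + σ * a| < 1 := by exact_mod_cast hz1
        rcases abs_cases (W + σ * a) with ⟨e1, e2⟩ | ⟨e1, e2⟩ <;> omega
      rw [hz0] at hval''
      simp only [Int.cast_zero, zero_mul, zero_add, add_zero] at hval''
      rcases hts with h | h <;> rw [h] at hval'' <;> linarith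
    · have h := best' α h0 h1 h2 (3*N+2) (d + E * a - σ * b) hd''0
        (by rw [hfib3]; exact hd''abs) (-(W + σ * a))
      rw [show ((-(W + σ * a):ℤ):ℝ) = -(((W + σ * a : ℤ)):ℝ) from by push_cast; ring,
        sub_neg_eq_add] at h
      linarith [abs_nonneg (((d + E * a - σ * b : ℤ):ℝ)*α + ((W + σ * a : ℤ):ℝ))]

private lemma fibodd : ∀ k : ℕ, Nat.fib (3*k+1) % 2 = 1 ∧ Nat.fib (3*k+2) % 2 = 1 := by
  intro k
  induction k with
  | zero => constructor <;> rfl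
  | succ k ih =>
    have e1 : Nat.fib (3*k+3) = Nat.fib (3*k+1) + Nat.fib (3*k+2) := by
      rw [show 3*k+3 = (3*k+1)+2 from by omega, Nat.fib_add_two,
        show 3*k+1+1 = 3*k+2 from by omega]
    have e2 : Nat.fib (3*k+4) = Nat.fib (3*k+2) + Nat.fib (3*k+3) := by
      rw [show 3*k+4 = (3*k+2)+2 from by omega, Nat.fib_add_two,
        show 3*k+2+1 = 3*k+3 from by omega]
    have e3 : Nat.fib (3*k+5) = Nat.fib (3*k+3) + Nat.fib (3*k+4) := by
      rw [show 3*k+5 = (3*k+3)+2 from by omega, Nat.fib_add_two,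
        show 3*k+3+1 = 3*k+4 from by omega]
    constructor
    · rw [show 3*(k+1)+1 = 3*k+4 from by omega]; omega
    · rw [show 3*(k+1)+2 = 3*k+5 from by omega]; omega

private lemma circle_eq (u v : ℝ) :
    ((u : AddCircle (1:ℝ)) = (v : AddCircle (1:ℝ))) ↔ ∃ w : ℤ, u - v = w := by
  constructor
  · intro h
    obtain ⟨k, hk⟩ := AddSubgroup.mem_zmultiples_iff.mp (QuotientAddGroup.eq_iff_sub_mem.mp h)
    exact ⟨k, by rw [← hk, zsmul_eq_mul, mul_one]⟩
  · rintro ⟨w, hw⟩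
    exact QuotientAddGroup.eq_iff_sub_mem.mpr
      (AddSubgroup.mem_zmultiples_iff.mpr ⟨w, by rw [zsmul_eq_mul, mul_one, hw]⟩)

/-- Let `α = (√5−1)/2`, `p_k = fib k`, `q_k = p_{k+1}`. For `n ≥ 1` and any `ρ`, the
orbit `{ρ + jα mod 1 : |j| ≤ (q_{3n}−1)/2}` of length `q_{3n}` on the circle `ℝ/ℤ`
has every gap to the next point equal to `α^(3n−1)` or `α^(3n)`. -/
theorem orbit_gaps_two_values (α : ℝ) (hα : α = (Real.sqrt 5 - 1) / 2)
    (n : ℕ) (hn : 1 ≤ n) (ρ : ℝ) (T : Set (AddCircle (1 : ℝ)))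
    (hT : T = {y : AddCircle (1 : ℝ) | ∃ j : ℤ,
      2 * |j| ≤ (Nat.fib (3 * n + 1) : ℤ) - 1 ∧ y = ((ρ + j * α : ℝ) : AddCircle (1 : ℝ))}) :
    ∀ y ∈ T,
      sInf {d : ℝ | 0 < d ∧ y + ((d : ℝ) : AddCircle (1 : ℝ)) ∈ T} = α ^ (3 * n - 1) ∨
      sInf {d : ℝ | 0 < d ∧ y + ((d : ℝ) : AddCircle (1 : ℝ)) ∈ T} = α ^ (3 * n) := by
  obtain ⟨N, rfl⟩ : ∃ N, n = N + 1 := ⟨n - 1, by omega⟩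
  have h5 : Real.sqrt 5 ^ 2 = 5 := Real.sq_sqrt (by norm_num)
  have hs5 : 0 ≤ Real.sqrt 5 := Real.sqrt_nonneg 5
  have hgt : (2:ℝ) < Real.sqrt 5 := by nlinarith
  have hlt3 : Real.sqrt 5 < 3 := by nlinarith
  have h0 : 0 < α := by rw [hα]; linarith
  have h1 : α < 1 := by rw [hα]; linarith
  have h2 : α^2 = 1 - α := by rw [hα]; linear_combination h5/4
  subst hT
  intro y hy
  simp only [Set.mem_setOf_eq, show 3*(N+1) = 3*N+3 from by omega,
    show 3*N+3+1 = 3*N+4 from by omega, show 3*(N+1)-1 = 3*N+2 from by omega] at hy ⊢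
  obtain ⟨j, hj, rfl⟩ := hy
  -- sign and identities
  obtain ⟨s, hs⟩ : ∃ s : ℝ, s = (-1:ℝ)^N := ⟨_, rfl⟩
  have hss : s * s = 1 := by rw [hs, ← pow_add]; exact Even.neg_one_pow ⟨N, rfl⟩
  have hA : (Nat.fib (3*N+3) : ℝ) * α - (Nat.fib (3*N+2) : ℝ) = s * α^(3*N+3) := by
    have h := fibid' α h2 (3*N+2)
    rw [show 3*N+2+1 = 3*N+3 from by omega] at h
    rw [h, hs, show ((-1:ℝ))^(3*N+2) = (-1)^N from by rw [pow_add, pow_mul]; norm_num]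
  have hC : (Nat.fib (3*N+2) : ℝ) * α - (Nat.fib (3*N+1) : ℝ) = (-s) * α^(3*N+2) := by
    have h := fibid' α h2 (3*N+1)
    rw [show 3*N+1+1 = 3*N+2 from by omega] at h
    rw [h, hs, show ((-1:ℝ))^(3*N+1) = -(-1)^N from by rw [pow_add, pow_mul]; norm_num]
  obtain ⟨E, hEdef⟩ : ∃ E : ℤ, E = (-1:ℤ)^(N+1) := ⟨_, rfl⟩
  have hE : E = 1 ∨ E = -1 := by
    rcases Nat.even_or_odd (N+1) with h | h
    · left; rw [hEdef]; exact Even.neg_one_pow h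
    · right; rw [hEdef]; exact Odd.neg_one_pow h
  have hEs : ((E:ℤ) : ℝ) = -s := by
    rw [hEdef, hs]; push_cast; rw [pow_succ]; ring
  have hfib_rec : (Nat.fib (3*N+4) : ℤ) = (Nat.fib (3*N+2) : ℤ) + (Nat.fib (3*N+3) : ℤ) := by
    have hh : Nat.fib (3*N+4) = Nat.fib (3*N+2) + Nat.fib (3*N+3) := by
      rw [show 3*N+4 = (3*N+2)+2 from by omega, Nat.fib_add_two,
          show 3*N+2+1 = 3*N+3 from by omega]
    exact_mod_cast congrArg (Nat.cast : ℕ → ℤ) hh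
  have hfibpos2 : (0:ℤ) < (Nat.fib (3*N+2) : ℤ) := by
    exact_mod_cast Nat.fib_pos.mpr (by omega)
  have hfibpos3 : (0:ℤ) < (Nat.fib (3*N+3) : ℤ) := by
    exact_mod_cast Nat.fib_pos.mpr (by omega)
  have hodd : (Nat.fib (3*N+4) : ℤ) % 2 = 1 := by
    have := (fibodd (N+1)).1
    rw [show 3*(N+1)+1 = 3*N+4 from by omega] at this
    omega
  -- characterize membership
  have hmem : ∀ x : ℝ, (((ρ + (j:ℝ) * α : ℝ) : AddCircle (1:ℝ)) + ((x : ℝ) : AddCircle (1:ℝ)) ∈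
      {y : AddCircle (1 : ℝ) | ∃ k : ℤ, 2 * |k| ≤ (Nat.fib (3*N+4) : ℤ) - 1 ∧
        y = ((ρ + k * α : ℝ) : AddCircle (1 : ℝ))}) ↔
      ∃ k w : ℤ, 2 * |k| ≤ (Nat.fib (3*N+4) : ℤ) - 1 ∧ x = ((k:ℝ) - j) * α + w := by
    intro x
    rw [← AddCircle.coe_add]
    constructor
    · rintro ⟨k, hk, hkey⟩
      obtain ⟨w, hw⟩ := (circle_eq _ _).mp hkey
      exact ⟨k, w, hk, by linarith [hw]⟩
    · rintro ⟨k, w, hk, hkey⟩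
      refine ⟨k, hk, (circle_eq _ _).mpr ⟨w, by linarith [hkey]⟩⟩
  by_cases hcase : 2 * |j - E * (Nat.fib (3*N+3) : ℤ)| ≤ (Nat.fib (3*N+4) : ℤ) - 1
  · -- small gap α^(3N+3)
    right
    apply IsLeast.csInf_eq
    constructor
    · refine ⟨pow_pos h0 _, (hmem _).mpr ⟨j - E * (Nat.fib (3*N+3) : ℤ), E * (Nat.fib (3*N+2) : ℤ), hcase, ?_⟩⟩
      push_cast
      rw [hEs]
      linear_combination (-s) * hA + (-(α^(3*N+3))) * hss
    · rintro x ⟨hx0, hxmem⟩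
      obtain ⟨k, w, hk, hkey⟩ := (hmem x).mp hxmem
      by_cases hkj : k = j
      · subst hkj
        have hxw : x = (w:ℝ) := by rw [hkey]; ring
        have hw1 : 1 ≤ w := by
          have : (0:ℝ) < w := by rw [← hxw]; exact hx0
          exact_mod_cast this
        have : (1:ℝ) ≤ x := by rw [hxw]; exact_mod_cast hw1
        calc α^(3*N+3) ≤ α^0 := pow_le_pow_of_le_one h0.le h1.le (Nat.zero_le _)
          _ = 1 := pow_zero α
          _ ≤ x := this
      · have hd0 : k - j ≠ 0 := fun hh => hkj (by omega)
        have hd0abs : |k - j| < (Nat.fib (3*N+4) : ℤ) := by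
          rcases abs_cases j with ⟨e1, e2⟩ | ⟨e1, e2⟩ <;>
          rcases abs_cases k with ⟨f1, f2⟩ | ⟨f1, f2⟩ <;>
          rcases abs_cases (k - j) with ⟨g1, g2⟩ | ⟨g1, g2⟩ <;>
          omega
        have h := best' α h0 h1 h2 (3*N+3) (k - j) hd0
          (by rw [show 3*N+3+1 = 3*N+4 from by omega]; exact hd0abs) (-w)
        rw [show ((-w:ℤ):ℝ) = -(w:ℝ) from by push_cast; ring, sub_neg_eq_add] at h
        have hxval : ((k - j : ℤ):ℝ) * α + (w:ℝ) = x := by push_cast; linarith [hkey]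
        rw [hxval, abs_of_pos hx0] at h
        exact h
  · -- big gap α^(3N+2)
    left
    apply IsLeast.csInf_eq
    constructor
    · have hkbound : 2 * |j + E * (Nat.fib (3*N+2) : ℤ)| ≤ (Nat.fib (3*N+4) : ℤ) - 1 := by
        push_neg at hcase
        rcases hE with rfl | rfl <;>
        rcases abs_cases j with ⟨e1, e2⟩ | ⟨e1, e2⟩ <;>
        rcases abs_cases (j - 1 * (Nat.fib (3*N+3) : ℤ)) with ⟨f1, f2⟩ | ⟨f1, f2⟩ <;>
        rcases abs_cases (j - (-1) * (Nat.fib (3*N+3) : ℤ)) with ⟨f1', f2'⟩ | ⟨f1', f2'⟩ <;>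
        rcases abs_cases (j + 1 * (Nat.fib (3*N+2) : ℤ)) with ⟨g1, g2⟩ | ⟨g1, g2⟩ <;>
        rcases abs_cases (j + (-1) * (Nat.fib (3*N+2) : ℤ)) with ⟨g1', g2'⟩ | ⟨g1', g2'⟩ <;>
        omega
      refine ⟨pow_pos h0 _, (hmem _).mpr ⟨j + E * (Nat.fib (3*N+2) : ℤ), -(E * (Nat.fib (3*N+1) : ℤ)), hkbound, ?_⟩⟩
      push_cast
      rw [hEs]
      linear_combination s * hC + (-(α^(3*N+2))) * hss
    · rintro x ⟨hx0, hxmem⟩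
      obtain ⟨k, w, hk, hkey⟩ := (hmem x).mp hxmem
      by_cases hkj : k = j
      · subst hkj
        have hxw : x = (w:ℝ) := by rw [hkey]; ring
        have hw1 : 1 ≤ w := by
          have : (0:ℝ) < w := by rw [← hxw]; exact hx0
          exact_mod_cast this
        have : (1:ℝ) ≤ x := by rw [hxw]; exact_mod_cast hw1
        calc α^(3*N+2) ≤ α^0 := pow_le_pow_of_le_one h0.le h1.le (Nat.zero_le _)
          _ = 1 := pow_zero α
          _ ≤ x := this
      · by_contra hlt
        push_neg at hlt
        have hd0 : k - j ≠ 0 := fun hh => hkj (by omega)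
        have hd0abs : |k - j| < (Nat.fib (3*N+4) : ℤ) := by
          rcases abs_cases j with ⟨e1, e2⟩ | ⟨e1, e2⟩ <;>
          rcases abs_cases k with ⟨f1, f2⟩ | ⟨f1, f2⟩ <;>
          rcases abs_cases (k - j) with ⟨g1, g2⟩ | ⟨g1, g2⟩ <;>
          omega
        have hxval : ((k - j : ℤ):ℝ) * α + (w:ℝ) = x := by push_cast; linarith [hkey]
        have hres := fact2' α h0 h1 h2 N (k - j) w hd0 hd0abs (by rw [hxval]; exact hx0)
          (by rw [hxval]; exact hlt)
        rw [← hEdef] at hres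
        apply hcase
        have : k = j - E * (Nat.fib (3*N+3) : ℤ) := by linear_combination hres
        rw [← this]
        exact hk
end

section
/- Three-gap theorem: for any irrational α ∈ (0,1) and any N ≥ 1, the points {jα mod 1 : 0 ≤ j < N} partition the circle ℝ/ℤ into arcs whose lengths take at most three distinct values, and if there are three values then the largest is the sum of the other two. -/
/-- The candidate gap from point `j` to point `k`. -/
private noncomputable def tgDelta (α : ℝ) (j k : ℕ) : ℝ :=
  if k = j then 1 else Int.fract (((k : ℤ) - (j : ℤ)) * α)

private lemma tg_fract_pos {α : ℝ} (hirr : Irrational α) {m : ℤ} (hm : m ≠ 0) :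
    0 < Int.fract ((m : ℝ) * α) := by
  rcases (Int.fract_nonneg ((m : ℝ) * α)).lt_or_eq with h | h
  · exact h
  · exfalso
    have h1 : ((m : ℝ) * α) = (⌊(m : ℝ) * α⌋ : ℝ) := by
      unfold Int.fract at h
      linarith [h.symm]
    exact (hirr.intCast_mul hm).ne_int _ h1

private lemma tg_fract_add (x y : ℝ) :
    Int.fract (x + y) = Int.fract (Int.fract x + Int.fract y) := by
  rw [Int.fract_eq_fract]
  exact ⟨⌊x⌋ + ⌊y⌋, by push_cast; unfold Int.fract; ring⟩

private lemma tg_fract_inj {α : ℝ} (hirr : Irrational α) {m n : ℤ} (hmn : m ≠ n) :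
    Int.fract ((m : ℝ) * α) ≠ Int.fract ((n : ℝ) * α) := by
  intro h
  rw [Int.fract_eq_fract] at h
  obtain ⟨z, hz⟩ := h
  have : ((m - n : ℤ) : ℝ) * α = (z : ℝ) := by push_cast; linarith
  exact (hirr.intCast_mul (sub_ne_zero.mpr hmn)).ne_int z this


private lemma three_gap_core (α : ℝ) (hirr : Irrational α) (N : ℕ) (hN : 2 ≤ N) :
    ∃ g₁ g₂ : ℝ, 0 < g₁ ∧ 0 < g₂ ∧ ∀ j, j < N →
      ((Finset.range N).inf' ⟨0, Finset.mem_range.mpr (by omega)⟩ (tgDelta α j))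
        ∈ ({g₁, g₂, g₁ + g₂} : Set ℝ) := by
  classical
  set F : ℤ → ℝ := fun m => Int.fract ((m : ℝ) * α) with hF
  -- basic facts about F
  have hFpos : ∀ m : ℤ, m ≠ 0 → 0 < F m := fun m hm => tg_fract_pos hirr hm
  have hFlt1 : ∀ m : ℤ, F m < 1 := fun m => Int.fract_lt_one _
  have hFnn : ∀ m : ℤ, 0 ≤ F m := fun m => Int.fract_nonneg _
  have hFinj : ∀ m n : ℤ, m ≠ n → F m ≠ F n := fun m n h => tg_fract_inj hirr h
  have hadd : ∀ m n : ℤ, F (m + n) = Int.fract (F m + F n) := by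
    intro m n
    have : ((m + n : ℤ) : ℝ) * α = (m : ℝ) * α + (n : ℝ) * α := by push_cast; ring
    rw [hF]; simp only []
    rw [this, tg_fract_add]
  have hsub : ∀ m n : ℤ, F (m - n) = Int.fract (F m - F n) := by
    intro m n
    rw [Int.fract_eq_fract]
    refine ⟨⌊(m : ℝ) * α⌋ - ⌊(n : ℝ) * α⌋, ?_⟩
    simp only [hF, Int.fract]
    push_cast
    ring
  have hfr_self : ∀ x : ℝ, 0 ≤ x → x < 1 → Int.fract x = x := fun x h1 h2 =>
    Int.fract_eq_self.mpr ⟨h1, h2⟩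
  have hfr_one : ∀ x : ℝ, 1 ≤ x → x < 2 → Int.fract x = x - 1 := by
    intro x h1 h2
    have : Int.fract x = Int.fract (x - (1 : ℤ)) := (Int.fract_sub_intCast x 1).symm
    rw [this]; push_cast
    exact Int.fract_eq_self.mpr ⟨by linarith, by linarith⟩
  have hfr_neg : ∀ x : ℝ, -1 ≤ x → x < 0 → Int.fract x = x + 1 := by
    intro x h1 h2
    have : Int.fract x = Int.fract (x + (1 : ℤ)) := (Int.fract_add_intCast x 1).symm
    rw [this]; push_cast
    exact Int.fract_eq_self.mpr ⟨by linarith, by linarith⟩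
  -- pick minimizer a and maximizer b over Icc 1 (N-1)
  have hSne : (Finset.Icc 1 (N - 1)).Nonempty := ⟨1, Finset.mem_Icc.mpr ⟨le_refl 1, by omega⟩⟩
  obtain ⟨a, haS, hamin⟩ := Finset.exists_min_image (Finset.Icc 1 (N - 1))
    (fun m : ℕ => F m) hSne
  obtain ⟨b, hbS, hbmax⟩ := Finset.exists_max_image (Finset.Icc 1 (N - 1))
    (fun m : ℕ => F m) hSne
  rw [Finset.mem_Icc] at haS hbS
  obtain ⟨ha1, ha2⟩ := haS
  obtain ⟨hb1, hb2⟩ := hbS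
  have ha0 : (a : ℤ) ≠ 0 := by omega
  have hb0 : (b : ℤ) ≠ 0 := by omega
  refine ⟨F a, 1 - F b, hFpos a ha0, by linarith [hFlt1 (b : ℤ)], ?_⟩
  have hmin : ∀ m : ℕ, 1 ≤ m → m ≤ N - 1 → F a ≤ F m := fun m h1 h2 =>
    hamin m (Finset.mem_Icc.mpr ⟨h1, h2⟩)
  have hmax : ∀ m : ℕ, 1 ≤ m → m ≤ N - 1 → F m ≤ F b := fun m h1 h2 =>
    hbmax m (Finset.mem_Icc.mpr ⟨h1, h2⟩)
  have hab : F a ≤ F b := hmin b hb1 hb2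
  -- L1 : N ≤ a + b
  have L1 : N ≤ a + b := by
    by_contra hcon
    push_neg at hcon
    have hc : ((a + b : ℕ) : ℤ) = (a : ℤ) + (b : ℤ) := by push_cast; ring
    have h1 : F ((a + b : ℕ) : ℤ) = Int.fract (F a + F b) := by rw [hc, hadd]
    rcases lt_or_ge (F (a : ℤ) + F (b : ℤ)) 1 with h | h
    · have h2 : F ((a + b : ℕ) : ℤ) = F a + F b := by
        rw [h1, hfr_self _ (by have := hFnn (a:ℤ); have := hFnn (b:ℤ); linarith) h]
      have h4 := hmax (a + b) (by omega) (by omega)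
      have hFa := hFpos a ha0
      rw [h2] at h4
      linarith
    · have h2 : F ((a + b : ℕ) : ℤ) = F a + F b - 1 := by
        rw [h1, hfr_one _ h (by linarith [hFlt1 (a:ℤ), hFlt1 (b:ℤ)])]
      have h4 := hmin (a + b) (by omega) (by omega)
      rw [h2] at h4
      linarith [hFlt1 (b : ℤ)]
  -- L2
  have L2 : ∀ m : ℕ, 1 ≤ m → m + a ≤ N - 1 → F a ≤ 1 - F m := by
    intro m h1 h2
    by_contra hcon
    push_neg at hcon
    have hsum : 1 < F (m : ℤ) + F (a : ℤ) := by linarith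
    have hc : ((m + a : ℕ) : ℤ) = (m : ℤ) + (a : ℤ) := by push_cast; ring
    have h3 : F ((m + a : ℕ) : ℤ) = F m + F a - 1 := by
      rw [hc, hadd, hfr_one _ hsum.le (by linarith [hFlt1 (m:ℤ), hFlt1 (a:ℤ)])]
    have h4 := hmin (m + a) (by omega) h2
    rw [h3] at h4
    linarith [hFlt1 (m : ℤ)]
  -- L3
  have L3 : ∀ m : ℕ, 1 ≤ m → m + b ≤ N - 1 → 1 - F b ≤ F m := by
    intro m h1 h2
    by_contra hcon
    push_neg at hcon
    have hc : ((m + b : ℕ) : ℤ) = (m : ℤ) + (b : ℤ) := by push_cast; ring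
    have h3 : F ((m + b : ℕ) : ℤ) = F m + F b := by
      rw [hc, hadd, hfr_self _ (by have := hFnn (m:ℤ); have := hFnn (b:ℤ); linarith) (by linarith)]
    have h4 := hmax (m + b) (by omega) h2
    rw [h3] at h4
    have hFm : (0:ℝ) < F (m : ℤ) := hFpos m (by omega)
    linarith
  -- L4
  have L4 : ∀ m : ℕ, 1 ≤ m → m < a → F a + (1 - F b) ≤ F m := by
    intro m h1 h2
    have hFam : F (a : ℤ) < F (m : ℤ) := lt_of_le_of_ne (hmin m h1 (by omega))
      (hFinj a m (by omega))
    have hc : ((a - m : ℕ) : ℤ) = (a : ℤ) - (m : ℤ) := by omega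
    have h3 : F ((a - m : ℕ) : ℤ) = F a - F m + 1 := by
      rw [hc, hsub, hfr_neg _ (by linarith [hFlt1 (m:ℤ), hFnn (a:ℤ)]) (by linarith)]
    have h4 := hmax (a - m) (by omega) (by omega)
    rw [h3] at h4
    linarith
  -- L5
  have L5 : ∀ m : ℕ, 1 ≤ m → m < b → F a + (1 - F b) ≤ 1 - F m := by
    intro m h1 h2
    have hFmb : F (m : ℤ) < F (b : ℤ) := lt_of_le_of_ne (hmax m h1 (by omega))
      (hFinj m b (by omega))
    have hc : ((b - m : ℕ) : ℤ) = (b : ℤ) - (m : ℤ) := by omega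
    have h3 : F ((b - m : ℕ) : ℤ) = F b - F m := by
      rw [hc, hsub, hfr_self _ (by linarith) (by linarith [hFlt1 (b:ℤ), hFnn (m:ℤ)])]
    have h4 := hmin (b - m) (by omega) (by omega)
    rw [h3] at h4
    linarith
  -- the delta values
  have hd_eq : ∀ j : ℕ, tgDelta α j j = 1 := fun j => if_pos rfl
  have hd_gt : ∀ j k : ℕ, j < k → tgDelta α j k = F ((k : ℤ) - j) := by
    intro j k h
    rw [tgDelta, if_neg (by omega)]
    congr 1
    push_cast
    ring
  have hd_lt : ∀ j k : ℕ, k < j → tgDelta α j k = 1 - F ((j : ℤ) - k) := by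
    intro j k h
    rw [tgDelta, if_neg (by omega)]
    have hne : Int.fract (((((j : ℤ) - (k : ℤ)) : ℤ) : ℝ) * α) ≠ 0 :=
      ne_of_gt (tg_fract_pos hirr (by omega))
    have h1 : ((((k:ℕ):ℤ):ℝ) - (((j:ℕ):ℤ):ℝ)) * α = -(((((j : ℤ) - (k : ℤ)) : ℤ) : ℝ) * α) := by
      push_cast; ring
    rw [h1, Int.fract_neg hne]
  intro j hj
  by_cases h1 : j + a < N
  · -- Case 1 : gap is F a
    left
    refine le_antisymm ?_ ?_
    · have hmem : j + a ∈ Finset.range N := Finset.mem_range.mpr h1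
      have := Finset.inf'_le (b := j + a) (tgDelta α j) hmem
      calc (Finset.range N).inf' _ (tgDelta α j) ≤ tgDelta α j (j + a) := this
        _ = F a := by
            rw [hd_gt j (j + a) (by omega)]
            congr 1
            push_cast; ring
    · apply Finset.le_inf'
      intro k hk
      rw [Finset.mem_range] at hk
      rcases lt_trichotomy k j with h | h | h
      · rw [hd_lt j k h]
        have := L2 (j - k) (by omega) (by omega)
        have hcast : ((j : ℤ) - k) = ((j - k : ℕ) : ℤ) := by omega
        rw [hcast]; exact this
      · rw [h, hd_eq]; linarith [hFlt1 (a : ℤ)]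
      · rw [hd_gt j k h]
        have := hmin (k - j) (by omega) (by omega)
        have hcast : ((k : ℤ) - j) = ((k - j : ℕ) : ℤ) := by omega
        rw [hcast]; exact this
  · by_cases h2 : b ≤ j
    · -- Case 2 : gap is 1 - F b
      right; left
      refine le_antisymm ?_ ?_
      · have hmem : j - b ∈ Finset.range N := Finset.mem_range.mpr (by omega)
        have := Finset.inf'_le (b := j - b) (tgDelta α j) hmem
        calc (Finset.range N).inf' _ (tgDelta α j) ≤ tgDelta α j (j - b) := this
          _ = 1 - F b := by
              rw [hd_lt j (j - b) (by omega)]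
              congr 2
              omega
      · apply Finset.le_inf'
        intro k hk
        rw [Finset.mem_range] at hk
        rcases lt_trichotomy k j with h | h | h
        · rw [hd_lt j k h]
          have := hmax (j - k) (by omega) (by omega)
          have hcast : ((j : ℤ) - k) = ((j - k : ℕ) : ℤ) := by omega
          rw [hcast]; linarith
        · rw [h, hd_eq]
          linarith [hFpos (b : ℤ) hb0]
        · rw [hd_gt j k h]
          have := L3 (k - j) (by omega) (by omega)
          have hcast : ((k : ℤ) - j) = ((k - j : ℕ) : ℤ) := by omega
          rw [hcast]; exact this
    · -- Case 3 : gap is F a + (1 - F b)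
      right; right
      have hPa : N - 1 - j < a := by omega
      have hQb : j < b := by omega
      have habne : a ≠ b := by
        intro hcon
        rcases Nat.lt_or_ge N 3 with h3 | h3
        · -- N = 2, so a = b = 1, contradiction with case conditions
          omega
        · have hm1 := hmax 1 le_rfl (by omega)
          have hn1 := hmin 1 le_rfl (by omega)
          have hm2 := hmax 2 (by omega) (by omega)
          have hn2 := hmin 2 (by omega) (by omega)
          rw [← hcon] at hm1 hm2
          have he1 : F ((1 : ℕ) : ℤ) = F (a : ℤ) := le_antisymm hm1 hn1
          have he2 : F ((2 : ℕ) : ℤ) = F (a : ℤ) := le_antisymm hm2 hn2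
          exact hFinj ((1 : ℕ) : ℤ) ((2 : ℕ) : ℤ) (by omega) (he1.trans he2.symm)
      refine le_antisymm ?_ ?_
      · rcases Nat.lt_or_ge b a with hba | hba'
        · -- a > b : achieved at k = j + (a - b)
          have hkN : j + (a - b) < N := by omega
          have hmem : j + (a - b) ∈ Finset.range N := Finset.mem_range.mpr hkN
          have := Finset.inf'_le (b := j + (a - b)) (tgDelta α j) hmem
          calc (Finset.range N).inf' _ (tgDelta α j) ≤ tgDelta α j (j + (a - b)) := this
            _ = F a + (1 - F b) := by
                rw [hd_gt j (j + (a - b)) (by omega)]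
                have hcast : ((j + (a - b) : ℕ) : ℤ) - j = (a : ℤ) - b := by omega
                rw [hcast]
                have hFab : F (a:ℤ) < F (b:ℤ) := lt_of_le_of_ne hab
                  (hFinj a b (by omega))
                rw [hsub, hfr_neg _ (by linarith [hFlt1 (b:ℤ), hFnn (a:ℤ)]) (by linarith)]
                ring
        · -- a < b : achieved at k = j - (b - a)
          have hba : a < b := by omega
          have hbj : b - a ≤ j := by omega
          have hne : 1 ≤ b - a := by omega
          have hmem : j - (b - a) ∈ Finset.range N := Finset.mem_range.mpr (by omega)
          have := Finset.inf'_le (b := j - (b - a)) (tgDelta α j) hmem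
          calc (Finset.range N).inf' _ (tgDelta α j) ≤ tgDelta α j (j - (b - a)) := this
            _ = F a + (1 - F b) := by
                rw [hd_lt j (j - (b - a)) (by omega)]
                have hcast : ((j : ℤ)) - (j - (b - a) : ℕ) = (b : ℤ) - a := by omega
                rw [hcast]
                have hFab : F (a:ℤ) < F (b:ℤ) := lt_of_le_of_ne hab
                  (hFinj a b (by omega))
                rw [hsub, hfr_self _ (by linarith) (by linarith [hFlt1 (b:ℤ), hFnn (a:ℤ)])]
                ring
      · apply Finset.le_inf'
        intro k hk
        rw [Finset.mem_range] at hk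
        rcases lt_trichotomy k j with h | h | h
        · rw [hd_lt j k h]
          have := L5 (j - k) (by omega) (by omega)
          have hcast : ((j : ℤ) - k) = ((j - k : ℕ) : ℤ) := by omega
          rw [hcast]; exact this
        · rw [h, hd_eq]; linarith
        · rw [hd_gt j k h]
          have := L4 (k - j) (by omega) (by omega)
          have hcast : ((k : ℤ) - j) = ((k - j : ℕ) : ℤ) := by omega
          rw [hcast]; exact this

private lemma tg_coe_eq {x y : ℝ} :
    ((x : AddCircle (1:ℝ)) = (y : AddCircle (1:ℝ))) ↔ ∃ n : ℤ, x - y = n := by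
  rw [QuotientAddGroup.eq_iff_sub_mem, AddSubgroup.mem_zmultiples_iff]
  constructor
  · rintro ⟨n, hn⟩; exact ⟨n, by rw [← hn]; simp⟩
  · rintro ⟨n, hn⟩; exact ⟨n, by rw [hn]; simp⟩

private lemma tg_sInf (α : ℝ) (hirr : Irrational α) (N : ℕ) (hN : 1 ≤ N)
    (T : Set (AddCircle (1 : ℝ)))
    (hT : T = {y : AddCircle (1 : ℝ) | ∃ j : ℕ,
      j < N ∧ y = ((j * α : ℝ) : AddCircle (1 : ℝ))})
    (j : ℕ) (hj : j < N) :
    sInf {d : ℝ | 0 < d ∧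
        ((j * α : ℝ) : AddCircle (1:ℝ)) + ((d : ℝ) : AddCircle (1:ℝ)) ∈ T}
      = (Finset.range N).inf' ⟨0, Finset.mem_range.mpr (by omega)⟩ (tgDelta α j) := by
  set D : Set ℝ := {d : ℝ | 0 < d ∧
      ((j * α : ℝ) : AddCircle (1:ℝ)) + ((d : ℝ) : AddCircle (1:ℝ)) ∈ T} with hD
  have hmemD : ∀ k, k < N → tgDelta α j k ∈ D := by
    intro k hk
    by_cases hkj : k = j
    · subst hkj
      rw [tgDelta, if_pos rfl]
      constructor
      · norm_num
      · rw [← AddCircle.coe_add, AddCircle.coe_add_period, hT]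
        exact ⟨k, hk, rfl⟩
    · rw [tgDelta, if_neg hkj]
      have hm0 : (k : ℤ) - j ≠ 0 := by omega
      refine ⟨by
        have h := tg_fract_pos hirr hm0
        convert h using 3
        push_cast
        try ring, ?_⟩
      rw [← AddCircle.coe_add, hT]
      refine ⟨k, hk, ?_⟩
      rw [tg_coe_eq]
      refine ⟨-⌊(((k : ℤ) - (j : ℤ)) : ℝ) * α⌋, ?_⟩
      unfold Int.fract
      push_cast
      ring
  have hDne : D.Nonempty := ⟨tgDelta α j j, hmemD j hj⟩
  have hbdd : BddBelow D := ⟨0, fun d hd => le_of_lt hd.1⟩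
  have hne : (Finset.range N).Nonempty := ⟨0, Finset.mem_range.mpr (by omega)⟩
  apply le_antisymm
  · obtain ⟨k, hk, hke⟩ := Finset.exists_mem_eq_inf' hne (tgDelta α j)
    rw [hke]
    exact csInf_le hbdd (hmemD k (Finset.mem_range.mp hk))
  · apply le_csInf hDne
    intro d hd
    obtain ⟨hd0, hdT⟩ := hd
    rw [hT] at hdT
    obtain ⟨k, hkN, hke⟩ := hdT
    rw [← AddCircle.coe_add, eq_comm, tg_coe_eq] at hke
    obtain ⟨n, hn⟩ := hke
    refine le_trans (Finset.inf'_le _ (Finset.mem_range.mpr hkN)) ?_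
    by_cases hkj : k = j
    · rw [tgDelta, if_pos hkj]
      rw [hkj] at hn
      have hdn : d = ((-n : ℤ) : ℝ) := by push_cast; linarith
      have h1 : 1 ≤ (-n : ℤ) := by
        by_contra hc
        push_neg at hc
        have h2 : ((-n : ℤ) : ℝ) ≤ 0 := by exact_mod_cast (by omega : (-n : ℤ) ≤ 0)
        rw [hdn] at hd0; linarith
      rw [hdn]
      exact_mod_cast h1
    · rw [tgDelta, if_neg hkj]
      set x : ℝ := ((((k : ℤ) - (j : ℤ)) : ℤ) : ℝ) * α with hx
      have hdx : d = Int.fract x + ((⌊x⌋ - n : ℤ) : ℝ) := by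
        unfold Int.fract
        push_cast at hn ⊢
        simp only [hx]
        push_cast
        linarith
      have hfr_lt : Int.fract x < 1 := Int.fract_lt_one x
      have hcpos : (0:ℝ) ≤ ((⌊x⌋ - n : ℤ) : ℝ) := by
        by_contra hcc
        push_neg at hcc
        have h1 : (⌊x⌋ - n : ℤ) < 0 := by exact_mod_cast hcc
        have h2 : ((⌊x⌋ - n : ℤ) : ℝ) ≤ -1 := by exact_mod_cast (by omega : (⌊x⌋ - n : ℤ) ≤ -1)
        linarith
      have hfin : Int.fract x ≤ d := by rw [hdx]; linarith
      calc Int.fract (((k : ℤ) - (j : ℤ) : ℝ) * α) = Int.fract x := by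
            congr 1; rw [hx]; push_cast; ring
        _ ≤ d := hfin


/-- Three-gap theorem: for irrational `α ∈ (0,1)` and `N ≥ 1`, the gaps to the next
point among `{jα mod 1 : 0 ≤ j < N}` on the circle `ℝ/ℤ` take at most three distinct
values, and if there are three then the largest is the sum of the other two. -/
theorem three_gap (α : ℝ) (hirr : Irrational α) (hα0 : 0 < α) (hα1 : α < 1)
    (N : ℕ) (hN : 1 ≤ N) (T : Set (AddCircle (1 : ℝ)))
    (hT : T = {y : AddCircle (1 : ℝ) | ∃ j : ℕ,
      j < N ∧ y = ((j * α : ℝ) : AddCircle (1 : ℝ))}) :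
    ∃ g₁ g₂ : ℝ, 0 < g₁ ∧ 0 < g₂ ∧
      ∀ y ∈ T,
        sInf {d : ℝ | 0 < d ∧ y + ((d : ℝ) : AddCircle (1 : ℝ)) ∈ T}
          ∈ ({g₁, g₂, g₁ + g₂} : Set ℝ) := by
  rcases Nat.lt_or_ge N 2 with h2 | h2
  · -- N = 1
    have hN1 : N = 1 := by omega
    refine ⟨1/2, 1/2, by norm_num, by norm_num, ?_⟩
    intro y hy
    rw [hT] at hy
    obtain ⟨j, hjN, rfl⟩ := hy
    rw [tg_sInf α hirr N hN T hT j hjN]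
    have hj0 : j = 0 := by omega
    subst hj0
    subst hN1
    right; right
    show _ = (1:ℝ)/2 + 1/2
    norm_num
    apply le_antisymm
    · simp [tgDelta]
    · simp [tgDelta]
  · obtain ⟨g₁, g₂, hg₁, hg₂, hmem⟩ := three_gap_core α hirr N h2
    refine ⟨g₁, g₂, hg₁, hg₂, ?_⟩
    intro y hy
    rw [hT] at hy
    obtain ⟨j, hjN, rfl⟩ := hy
    rw [tg_sInf α hirr N hN T hT j hjN]
    exact hmem j hjN
end
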